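/- Let a, b, c, d be natural numbers with b ≥ d ≥ 1. Suppose that for every positive integer n there exist positive integers s, t with s > n·t such that (c·t + d·s) divides (a·t + b·s). Then d divides b and, writing k = b/d, one has a = c·k (equivalently a·d = b·c). -/

import Mathlib

/-- The arithmetic core of the degree argument: if `b ≥ d ≥ 1` and for every `n ≥ 1`
there are positive integers `s, t` with `s > n·t` and `(c·t + d·s) ∣ (a·t + b·s)`,
then `d ∣ b` and, with `k = b / d`, `a = c·k` (equivalently `a·d = b·c`). -/
theorem degreeArithmetic (a b c d : ℕ) (hbd : d ≤ b) (hd : 1 ≤ d)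
    (h : ∀ n : ℕ, 0 < n → ∃ s t : ℕ, 0 < s ∧ 0 < t ∧ n * t < s ∧
      (c * t + d * s) ∣ (a * t + b * s)) :
    d ∣ b ∧ a = c * (b / d) ∧ a * d = b * c := by
  obtain ⟨s, t, hs, ht, hst, ⟨q, hq⟩⟩ := h (a * d + b * c + 1) (by positivity)
  have hDpos : 0 < c * t + d * s := by positivity
  -- First show a*d = b*c
  have had : a * d = b * c := by
    by_contra hne
    have h1 : ((c * t + d * s : ℕ) : ℤ) ∣ ((a : ℤ) * d - b * c) * t := by
      have hd1 : ((c * t + d * s : ℕ) : ℤ) ∣ (d : ℤ) * ((a * t + b * s : ℕ) : ℤ) :=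
        Dvd.dvd.mul_left (Int.natCast_dvd_natCast.mpr ⟨q, hq⟩) _
      have hd2 : ((c * t + d * s : ℕ) : ℤ) ∣ (b : ℤ) * ((c * t + d * s : ℕ) : ℤ) :=
        Dvd.dvd.mul_left dvd_rfl _
      have := dvd_sub hd1 hd2
      convert this using 1
      · rfl
      push_cast
      ring
    have hne' : ((a : ℤ) * d - b * c) * t ≠ 0 := by
      apply mul_ne_zero
      · intro hz
        apply hne
        have : (a : ℤ) * d = b * c := by linarith [hz, sub_eq_zero.mp hz]
        exact_mod_cast this
      · exact_mod_cast ht.ne'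
    have hle : ((c * t + d * s : ℕ) : ℤ) ≤ |((a : ℤ) * d - b * c) * t| :=
      Int.le_of_dvd (abs_pos.mpr hne') ((dvd_abs _ _).mpr h1)
    have habs : |((a : ℤ) * d - b * c) * t| ≤ ((a : ℤ) * d + b * c) * t := by
      rw [abs_mul, abs_of_nonneg (by positivity : (0:ℤ) ≤ (t:ℤ))]
      apply mul_le_mul_of_nonneg_right _ (by positivity)
      calc |(a : ℤ) * d - b * c| ≤ |(a : ℤ) * d| + |(b : ℤ) * c| := abs_sub _ _
        _ = (a : ℤ) * d + b * c := by
            rw [abs_of_nonneg (by positivity), abs_of_nonneg (by positivity)]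
    -- c*t + d*s ≤ (a*d + b*c) * t  in ℕ
    have hle2 : c * t + d * s ≤ (a * d + b * c) * t := by
      exact_mod_cast hle.trans habs
    have hs' : s ≤ d * s := Nat.le_mul_of_pos_left s hd
    have : (a * d + b * c + 1) * t < (a * d + b * c) * t := by
      calc (a * d + b * c + 1) * t < s := hst
        _ ≤ d * s := hs'
        _ ≤ c * t + d * s := Nat.le_add_left _ _
        _ ≤ (a * d + b * c) * t := hle2
    nlinarith
  -- Now derive b = d * q
  have key : d * ((c * t + d * s) * q) + b * c * t = b * (c * t + d * s) + a * d * t := by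
    rw [← hq]; ring
  have h3 : a * d * t = b * c * t := by rw [had]
  rw [h3] at key
  have h2 : d * ((c * t + d * s) * q) = b * (c * t + d * s) :=
    Nat.add_right_cancel key
  have hbq : d * q = b := by
    have h4 : (d * q) * (c * t + d * s) = b * (c * t + d * s) := by
      rw [← h2]; ring
    exact Nat.eq_of_mul_eq_mul_right hDpos h4
  have hdvd : d ∣ b := ⟨q, hbq.symm⟩
  have hquot : b / d = q := by rw [← hbq, Nat.mul_div_cancel_left _ hd]
  have haq : a = c * q := by
    have e1 : (c * t + d * s) * q = c * q * t + b * s := by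
      rw [← hbq]; ring
    have e2 : a * t + b * s = c * q * t + b * s := by rw [hq, e1]
    have e3 : a * t = c * q * t := Nat.add_right_cancel e2
    exact Nat.eq_of_mul_eq_mul_right ht e3
  exact ⟨hdvd, by rw [hquot]; exact haq, had⟩
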